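/- Let G = Σ_j ω_j ⊗ ω_j† ∈ Ω¹⊗_B Ω¹ be the line element of a homogeneous frame (ω_j), which has total degree zero, and suppose the pair (∇→, ∇←) of conjugate connections on Ω¹ satisfies (∇→⊗1 + 1⊗∇←)(G) = 0 (the Hermitian condition). Then the deformed connections satisfy (∇→_θ⊗1 + 1⊗∇←_θ)(G_θ) = 0 where G_θ := T_θ(G); hence ∇→_θ is Hermitian. -/

import Mathlib

/-- If `G = Σ_j ω_j ⊗ ω_j†` (total degree zero, frame `(ω_j)` homogeneous of
degrees `d j`, so `ω_j† ∈ Gr (−d j)`) satisfies the Hermitian condition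
`(∇→⊗1 + 1⊗∇←)(G) = 0`, then the deformed connections satisfy
`(∇→_θ⊗1 + 1⊗∇←_θ)(G_θ) = 0` for `G_θ = T_θ(G) = Σ_j λ^{(d j)₁(d j)₂} ω_j ⊗_θ ω_j†`;
hence `∇→_θ` is Hermitian. -/
theorem stmt_15 {Ω T W2 Tθ W2θ : Type*}
    [AddCommGroup Ω] [Module ℂ Ω] [AddCommGroup T] [Module ℂ T]
    [AddCommGroup W2] [Module ℂ W2] [AddCommGroup Tθ] [Module ℂ Tθ]
    [AddCommGroup W2θ] [Module ℂ W2θ]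
    (l : ℂ) (hl : ‖l‖ = 1)
    (Gr : ℤ × ℤ → Submodule ℂ Ω)
    (t : Ω → Ω → T) (tθ : Ω → Ω → Tθ)
    (t3 : Ω → Ω → Ω → W2) (t3θ : Ω → Ω → Ω → W2θ)
    (Tmap : T → Tθ)
    (hTmap_add : ∀ v w : T, Tmap (v + w) = Tmap v + Tmap w)
    (hTmap_t : ∀ (m n : ℤ × ℤ) (α β : Ω), α ∈ Gr m → β ∈ Gr n →
      Tmap (t α β) = l ^ (-(m.2 * n.1)) • tθ α β)
    (Hθ : W2 → W2θ)
    (hHθ_add : ∀ v w : W2, Hθ (v + w) = Hθ v + Hθ w)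
    (hHθ_t : ∀ (m n p : ℤ × ℤ) (α β γ : Ω), α ∈ Gr m → β ∈ Gr n → γ ∈ Gr p →
      Hθ (t3 α β γ) = l ^ (-(m.2 * n.1) - m.2 * p.1 - n.2 * p.1) • t3θ α β γ)
    (E3 : T → Ω → W2)
    (hE3_add : ∀ (v w : T) (γ : Ω), E3 (v + w) γ = E3 v γ + E3 w γ)
    (hE3_t : ∀ α β γ : Ω, E3 (t α β) γ = t3 α β γ)
    (F3 : Ω → T → W2)
    (hF3_add : ∀ (ω : Ω) (v w : T), F3 ω (v + w) = F3 ω v + F3 ω w)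
    (hF3_t : ∀ ω β γ : Ω, F3 ω (t β γ) = t3 ω β γ)
    (E3θ : Tθ → Ω → W2θ)
    (hE3θ_add : ∀ (v w : Tθ) (γ : Ω), E3θ (v + w) γ = E3θ v γ + E3θ w γ)
    (hE3θ_s : ∀ (c : ℂ) (v : Tθ) (γ : Ω), E3θ (c • v) γ = c • E3θ v γ)
    (hE3θ_t : ∀ α β γ : Ω, E3θ (tθ α β) γ = t3θ α β γ)
    (F3θ : Ω → Tθ → W2θ)
    (hF3θ_add : ∀ (ω : Ω) (v w : Tθ), F3θ ω (v + w) = F3θ ω v + F3θ ω w)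
    (hF3θ_s : ∀ (ω : Ω) (c : ℂ) (v : Tθ), F3θ ω (c • v) = c • F3θ ω v)
    (hF3θ_t : ∀ ω β γ : Ω, F3θ ω (tθ β γ) = t3θ ω β γ)
    (covr : Ω → T) (covl : Ω → T)
    (hcovr_hom : ∀ (n : ℤ × ℤ) (ω : Ω), ω ∈ Gr n →
      ∃ (k : ℕ) (α β : Fin k → Ω) (d e : Fin k → ℤ × ℤ),
        (∀ i, α i ∈ Gr (d i)) ∧ (∀ i, β i ∈ Gr (e i)) ∧ (∀ i, d i + e i = n) ∧
        covr ω = ∑ i, t (α i) (β i))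
    (hcovl_hom : ∀ (n : ℤ × ℤ) (ω : Ω), ω ∈ Gr n →
      ∃ (k : ℕ) (α β : Fin k → Ω) (d e : Fin k → ℤ × ℤ),
        (∀ i, α i ∈ Gr (d i)) ∧ (∀ i, β i ∈ Gr (e i)) ∧ (∀ i, d i + e i = n) ∧
        covl ω = ∑ i, t (α i) (β i))
    -- the homogeneous frame data of the line element G = Σ_j ω_j ⊗ ω_j†:
    (N : ℕ) (ωs ηs : Fin N → Ω) (d : Fin N → ℤ × ℤ)
    (hωs : ∀ j, ωs j ∈ Gr (d j)) (hηs : ∀ j, ηs j ∈ Gr (-(d j)))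
    -- the Hermitian condition (∇→⊗1 + 1⊗∇←)(G) = 0:
    (hHerm : ∑ j, (E3 (covr (ωs j)) (ηs j) + F3 (ωs j) (covl (ηs j))) = 0) :
    -- the deformed Hermitian condition (∇→_θ⊗1 + 1⊗∇←_θ)(G_θ) = 0:
    ∑ j, l ^ ((d j).1 * (d j).2) •
        (E3θ (Tmap (covr (ωs j))) (ηs j) + F3θ (ωs j) (Tmap (covl (ηs j)))) = 0 := by

  have hl0 : l ≠ 0 := by
    intro h; rw [h] at hl; simp at hl
  -- bundled additive maps
  let HθM : W2 →+ W2θ := AddMonoidHom.mk' Hθ hHθ_add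
  let TM : T →+ Tθ := AddMonoidHom.mk' Tmap hTmap_add
  have key : ∀ j, Hθ (E3 (covr (ωs j)) (ηs j) + F3 (ωs j) (covl (ηs j)))
      = l ^ ((d j).1 * (d j).2) •
        (E3θ (Tmap (covr (ωs j))) (ηs j) + F3θ (ωs j) (Tmap (covl (ηs j)))) := by
    intro j
    obtain ⟨k, α, β, dm, em, hα, hβ, hde, hcov⟩ := hcovr_hom (d j) (ωs j) (hωs j)
    obtain ⟨k', α', β', dm', em', hα', hβ', hde', hcov'⟩ := hcovl_hom (-(d j)) (ηs j) (hηs j)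
    -- additive maps for E3, F3 in the T-argument
    let E3M : W2 →+ W2θ := HθM
    have hE3sum : E3 (covr (ωs j)) (ηs j) = ∑ i, t3 (α i) (β i) (ηs j) := by
      rw [hcov]
      rw [show E3 (∑ i, t (α i) (β i)) (ηs j)
          = (AddMonoidHom.mk' (fun v => E3 v (ηs j)) (fun v w => hE3_add v w (ηs j)))
              (∑ i, t (α i) (β i)) from rfl, map_sum]
      exact Finset.sum_congr rfl fun i _ => hE3_t _ _ _
    have hF3sum : F3 (ωs j) (covl (ηs j)) = ∑ i, t3 (ωs j) (α' i) (β' i) := by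
      rw [hcov']
      rw [show F3 (ωs j) (∑ i, t (α' i) (β' i))
          = (AddMonoidHom.mk' (fun v => F3 (ωs j) v) (fun v w => hF3_add (ωs j) v w))
              (∑ i, t (α' i) (β' i)) from rfl, map_sum]
      exact Finset.sum_congr rfl fun i _ => hF3_t _ _ _
    -- linear maps for E3θ, F3θ
    let E3L : Tθ →ₗ[ℂ] W2θ :=
      { toFun := fun v => E3θ v (ηs j)
        map_add' := fun v w => hE3θ_add v w (ηs j)
        map_smul' := fun c v => hE3θ_s c v (ηs j) }
    let F3L : Tθ →ₗ[ℂ] W2θ :=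
      { toFun := fun v => F3θ (ωs j) v
        map_add' := fun v w => hF3θ_add (ωs j) v w
        map_smul' := fun c v => hF3θ_s (ωs j) c v }
    have hTr : Tmap (covr (ωs j)) = ∑ i, l ^ (-((dm i).2 * (em i).1)) • tθ (α i) (β i) := by
      rw [hcov, show Tmap (∑ i, t (α i) (β i)) = TM (∑ i, t (α i) (β i)) from rfl, map_sum]
      exact Finset.sum_congr rfl fun i _ => hTmap_t _ _ _ _ (hα i) (hβ i)
    have hTl : Tmap (covl (ηs j)) = ∑ i, l ^ (-((dm' i).2 * (em' i).1)) • tθ (α' i) (β' i) := by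
      rw [hcov', show Tmap (∑ i, t (α' i) (β' i)) = TM (∑ i, t (α' i) (β' i)) from rfl, map_sum]
      exact Finset.sum_congr rfl fun i _ => hTmap_t _ _ _ _ (hα' i) (hβ' i)
    have hE3θsum : E3θ (Tmap (covr (ωs j))) (ηs j)
        = ∑ i, l ^ (-((dm i).2 * (em i).1)) • t3θ (α i) (β i) (ηs j) := by
      rw [hTr, show E3θ (∑ i, l ^ (-((dm i).2 * (em i).1)) • tθ (α i) (β i)) (ηs j)
          = E3L (∑ i, l ^ (-((dm i).2 * (em i).1)) • tθ (α i) (β i)) from rfl, map_sum]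
      refine Finset.sum_congr rfl fun i _ => ?_
      rw [map_smul]
      exact congrArg _ (hE3θ_t _ _ _)
    have hF3θsum : F3θ (ωs j) (Tmap (covl (ηs j)))
        = ∑ i, l ^ (-((dm' i).2 * (em' i).1)) • t3θ (ωs j) (α' i) (β' i) := by
      rw [hTl, show F3θ (ωs j) (∑ i, l ^ (-((dm' i).2 * (em' i).1)) • tθ (α' i) (β' i))
          = F3L (∑ i, l ^ (-((dm' i).2 * (em' i).1)) • tθ (α' i) (β' i)) from rfl, map_sum]
      refine Finset.sum_congr rfl fun i _ => ?_
      rw [map_smul]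
      exact congrArg _ (hF3θ_t _ _ _)
    rw [hE3sum, hF3sum, hHθ_add, show Hθ (∑ i, t3 (α i) (β i) (ηs j))
        = HθM (∑ i, t3 (α i) (β i) (ηs j)) from rfl,
      show Hθ (∑ i, t3 (ωs j) (α' i) (β' i))
        = HθM (∑ i, t3 (ωs j) (α' i) (β' i)) from rfl, map_sum, map_sum,
      hE3θsum, hF3θsum, smul_add, Finset.smul_sum, Finset.smul_sum]
    congr 1
    · refine Finset.sum_congr rfl fun i _ => ?_
      rw [show HθM (t3 (α i) (β i) (ηs j)) = Hθ (t3 (α i) (β i) (ηs j)) from rfl,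
        hHθ_t (dm i) (em i) (-(d j)) _ _ _ (hα i) (hβ i) (hηs j), smul_smul, ← zpow_add₀ hl0]
      congr 1
      have h2 : (dm i).2 + (em i).2 = (d j).2 := by
        have := hde i; rw [Prod.ext_iff] at this; simpa using this.2
      simp only [Prod.fst_neg]
      congr 1
      linear_combination (d j).1 * h2
    · refine Finset.sum_congr rfl fun i _ => ?_
      rw [show HθM (t3 (ωs j) (α' i) (β' i)) = Hθ (t3 (ωs j) (α' i) (β' i)) from rfl,
        hHθ_t (d j) (dm' i) (em' i) _ _ _ (hωs j) (hα' i) (hβ' i), smul_smul, ← zpow_add₀ hl0]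
      congr 1
      have h1 : (dm' i).1 + (em' i).1 = -(d j).1 := by
        have := hde' i; rw [Prod.ext_iff] at this; simpa using this.1
      congr 1
      linear_combination (-(d j).2) * h1
  calc ∑ j, l ^ ((d j).1 * (d j).2) •
        (E3θ (Tmap (covr (ωs j))) (ηs j) + F3θ (ωs j) (Tmap (covl (ηs j))))
      = ∑ j, Hθ (E3 (covr (ωs j)) (ηs j) + F3 (ωs j) (covl (ηs j))) :=
        Finset.sum_congr rfl fun j _ => (key j).symm
    _ = HθM (∑ j, (E3 (covr (ωs j)) (ηs j) + F3 (ωs j) (covl (ηs j)))) := (map_sum HθM _ _).symm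
    _ = 0 := by rw [hHerm]; exact map_zero HθM
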